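/- Suppose λ_k = πk + μ_k with μ_k → 0 and λ_k strictly increasing, and g ∈ L²(0,1). If sin(λ_k) = −∫₀¹ g(y) sin(λ_k y) dy for all k ∈ ℕ, then (μ_k) ∈ ℓ². (The numbers sin(λ_k) = (−1)^k sin(μ_k) are Fourier coefficients of −g with respect to the basis biorthogonal to the Riesz basis {sin(λ_k x)}, hence square-summable, and μ_k → 0 implies |μ_k| ≤ 2|sin μ_k| for large k.) -/

import Mathlib

open Filter MeasureTheory Real intervalIntegral

lemma aux_int_cos (c : ℝ) (hc : c ≠ 0) : ∫ y in (0:ℝ)..1, Real.cos (c * y) = Real.sin c / c := by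
  rw [intervalIntegral.integral_comp_mul_left (fun x => Real.cos x) hc]
  simp [integral_cos, smul_eq_mul, div_eq_inv_mul]

lemma aux_J (j : ℤ) : ∫ y in (0:ℝ)..1, Real.cos (Real.pi * j * y) = if j = 0 then 1 else 0 := by
  by_cases h : j = 0
  · simp [h]
  · have hc : Real.pi * j ≠ 0 := by
      have := Real.pi_ne_zero
      simp [this, h]
    rw [aux_int_cos _ hc, if_neg h]
    rw [mul_comm Real.pi (j:ℝ), Real.sin_int_mul_pi]
    simp

lemma aux_sinsin (n m : ℕ) :
    ∫ y in (0:ℝ)..1, Real.sin (Real.pi*(n+1)*y) * Real.sin (Real.pi*(m+1)*y)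
      = if n = m then 1/2 else 0 := by
  have h1 : ∀ y : ℝ, Real.sin (Real.pi*(n+1)*y) * Real.sin (Real.pi*(m+1)*y)
      = (Real.cos ((Real.pi*(n+1) - Real.pi*(m+1))*y)
         - Real.cos ((Real.pi*(n+1) + Real.pi*(m+1))*y))/2 := by
    intro y
    rw [sub_mul, add_mul, Real.cos_sub, Real.cos_add]
    ring
  simp_rw [h1]
  rw [intervalIntegral.integral_div, intervalIntegral.integral_sub
    ((Continuous.intervalIntegrable (by fun_prop) _ _))
    ((Continuous.intervalIntegrable (by fun_prop) _ _))]
  have e1 : Real.pi*(n+1) - Real.pi*(m+1) = Real.pi * (((n:ℤ) - m : ℤ) : ℝ) := by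
    push_cast; ring
  have e2 : Real.pi*(n+1) + Real.pi*(m+1) = Real.pi * (((n:ℤ) + m + 2 : ℤ) : ℝ) := by
    push_cast; ring
  rw [e1, e2, aux_J, aux_J]
  have h2 : ((n:ℤ) + m + 2 : ℤ) ≠ 0 := by omega
  by_cases h : n = m
  · simp [h, show ((m:ℤ)+(m:ℤ)+2 ≠ 0) by omega]
  · have : ((n:ℤ) - m : ℤ) ≠ 0 := by omega
    simp [h, this, h2]

lemma aux_coscos (n m : ℕ) :
    ∫ y in (0:ℝ)..1, Real.cos (Real.pi*(n+1)*y) * Real.cos (Real.pi*(m+1)*y)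
      = if n = m then 1/2 else 0 := by
  have h1 : ∀ y : ℝ, Real.cos (Real.pi*(n+1)*y) * Real.cos (Real.pi*(m+1)*y)
      = (Real.cos ((Real.pi*(n+1) - Real.pi*(m+1))*y)
         + Real.cos ((Real.pi*(n+1) + Real.pi*(m+1))*y))/2 := by
    intro y
    rw [sub_mul, add_mul, Real.cos_sub, Real.cos_add]
    ring
  simp_rw [h1]
  rw [intervalIntegral.integral_div, intervalIntegral.integral_add
    ((Continuous.intervalIntegrable (by fun_prop) _ _))
    ((Continuous.intervalIntegrable (by fun_prop) _ _))]
  have e1 : Real.pi*(n+1) - Real.pi*(m+1) = Real.pi * (((n:ℤ) - m : ℤ) : ℝ) := by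
    push_cast; ring
  have e2 : Real.pi*(n+1) + Real.pi*(m+1) = Real.pi * (((n:ℤ) + m + 2 : ℤ) : ℝ) := by
    push_cast; ring
  rw [e1, e2, aux_J, aux_J]
  have h2 : ((n:ℤ) + m + 2 : ℤ) ≠ 0 := by omega
  by_cases h : n = m
  · simp [h, show ((m:ℤ)+(m:ℤ)+2 ≠ 0) by omega]
  · have : ((n:ℤ) - m : ℤ) ≠ 0 := by omega
    simp [h, this, h2]



lemma bessel_aux (v : ℕ → ℝ → ℝ) (hcont : ∀ k, Continuous (v k)) (hbd : ∀ k y, |v k y| ≤ 1)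
    (horth : ∀ n m : ℕ, ∫ y in Set.Ioc (0:ℝ) 1, v n y * v m y = if n = m then 1/2 else 0)
    (g : ℝ → ℝ) (hg2 : MemLp g 2 (volume.restrict (Set.Ioc (0:ℝ) 1))) :
    Summable fun k => (∫ y in Set.Ioc (0:ℝ) 1, g y * v k y) ^ 2 := by
  haveI : Fact (volume (Set.Ioc (0:ℝ) 1) < ⊤) := ⟨by simp⟩
  set ν := volume.restrict (Set.Ioc (0:ℝ) 1) with hν
  have hvk : ∀ k, MemLp (fun y => Real.sqrt 2 * v k y) 2 ν := by
    intro k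
    refine MemLp.of_bound (((continuous_const.mul (hcont k))).aestronglyMeasurable) (Real.sqrt 2) ?_
    filter_upwards with y
    rw [Real.norm_eq_abs, abs_mul, abs_of_nonneg (Real.sqrt_nonneg 2)]
    nlinarith [hbd k y, Real.sqrt_nonneg 2]
  let e : ℕ → Lp ℝ 2 ν := fun k => (hvk k).toLp _
  have hinner : ∀ (k : ℕ) (f : ℝ → ℝ) (hf : MemLp f 2 ν),
      (inner ℝ (e k) (hf.toLp f) : ℝ) = ∫ y, (Real.sqrt 2 * v k y) * f y ∂ν := by
    intro k f hf
    rw [MeasureTheory.L2.inner_def]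
    apply MeasureTheory.integral_congr_ae
    filter_upwards [(hvk k).coeFn_toLp, hf.coeFn_toLp] with y h1 h2
    simp [e, h1, h2, RCLike.inner_apply, conj_trivial, mul_comm (f y)]
  have horth' : Orthonormal ℝ e := by
    rw [orthonormal_iff_ite]
    intro n m
    rw [hinner n _ (hvk m)]
    have : ∀ y : ℝ, (Real.sqrt 2 * v n y) * (Real.sqrt 2 * v m y) = 2 * (v n y * v m y) := by
      intro y
      have h2 : Real.sqrt 2 * Real.sqrt 2 = 2 := Real.mul_self_sqrt (by norm_num)
      calc Real.sqrt 2 * v n y * (Real.sqrt 2 * v m y)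
          = (Real.sqrt 2 * Real.sqrt 2) * (v n y * v m y) := by ring
        _ = 2 * (v n y * v m y) := by rw [h2]
    simp_rw [this]
    rw [MeasureTheory.integral_const_mul, horth n m]
    by_cases h : n = m <;> simp [h]
  have hsum := horth'.inner_products_summable (hg2.toLp g)
  have heq : ∀ k, ‖(inner ℝ (e k) (hg2.toLp g) : ℝ)‖ ^ 2
      = 2 * (∫ y in Set.Ioc (0:ℝ) 1, g y * v k y) ^ 2 := by
    intro k
    rw [hinner k g hg2]
    have : ∀ y : ℝ, (Real.sqrt 2 * v k y) * g y = Real.sqrt 2 * (g y * v k y) := by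
      intro y; ring
    simp_rw [this]
    rw [MeasureTheory.integral_const_mul, Real.norm_eq_abs, sq_abs, mul_pow,
      Real.sq_sqrt (by norm_num : (0:ℝ) ≤ 2)]
  have hsum2 : Summable fun k => 2 * (∫ y in Set.Ioc (0:ℝ) 1, g y * v k y) ^ 2 := by
    simpa only [heq] using hsum
  have := hsum2.div_const 2
  simpa [mul_div_assoc, mul_div_cancel_left₀] using this



lemma aux_cos_approx (t : ℝ) : |Real.cos t - 1| ≤ t^2/2 := by
  have h1 := Real.cos_le_one t
  have h2 : 1 - t ^ 2 / 2 ≤ Real.cos t := Real.one_sub_sq_div_two_le_cos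
  rw [abs_le]
  constructor <;> nlinarith [sq_nonneg t]

lemma aux_sin_approx {t : ℝ} (ht : |t| ≤ 1) : |Real.sin t - t| ≤ |t|^3/4 := by
  rcases lt_trichotomy t 0 with h | rfl | h
  · have h0 : 0 < -t := by linarith
    have h1 : -t ≤ 1 := by have := (abs_le.1 ht).1; linarith
    have h2 := Real.sin_gt_sub_cube h0
    have h3 := Real.sin_lt h0
    rw [Real.sin_neg] at h2 h3
    rw [abs_of_nonpos h.le, abs_of_nonneg (by nlinarith : (0:ℝ) ≤ Real.sin t - t)]
    nlinarith
  · simp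
  · have h1 : t ≤ 1 := (abs_le.1 ht).2
    have h2 := Real.sin_gt_sub_cube h
    have h3 := Real.sin_lt h
    rw [abs_of_nonneg h.le, abs_of_nonpos (by nlinarith : Real.sin t - t ≤ 0)]
    nlinarith

lemma aux_half_sin {t : ℝ} (ht : |t| ≤ 1) : |t|/2 ≤ |Real.sin t| := by
  have h := aux_sin_approx ht
  have h3 : |t|^3 ≤ |t| := by simpa using pow_le_pow_of_le_one (abs_nonneg t) ht (by norm_num : 1 ≤ 3)
  have htr : |t| ≤ |Real.sin t| + |Real.sin t - t| := by
    calc |t| = |Real.sin t + (t - Real.sin t)| := by ring_nf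
      _ ≤ |Real.sin t| + |t - Real.sin t| := abs_add_le _ _
      _ = |Real.sin t| + |Real.sin t - t| := by rw [abs_sub_comm]
  linarith [abs_nonneg t]



set_option maxHeartbeats 1000000 in
theorem stmt17 (μ : ℕ → ℝ) (g : ℝ → ℝ)
    (hμ0 : Tendsto μ atTop (nhds 0))
    (hmono : StrictMono fun k : ℕ => Real.pi * (k + 1) + μ k)
    (hgm : Measurable g)
    (hg : MeasureTheory.IntegrableOn (fun y => g y ^ 2) (Set.Ioc (0:ℝ) 1))
    (heq : ∀ k : ℕ, Real.sin (Real.pi * (k + 1) + μ k)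
      = - ∫ y in (0:ℝ)..1, g y * Real.sin ((Real.pi * (k + 1) + μ k) * y)) :
    Summable fun k => μ k ^ 2 := by
  haveI : Fact (volume (Set.Ioc (0:ℝ) 1) < ⊤) := ⟨by simp⟩
  have hsb : ∀ x : ℝ, |Real.sin x| ≤ 1 := fun x => abs_le.2 ⟨Real.neg_one_le_sin x, Real.sin_le_one x⟩
  have hcb : ∀ x : ℝ, |Real.cos x| ≤ 1 := fun x => abs_le.2 ⟨Real.neg_one_le_cos x, Real.cos_le_one x⟩
  have hg2 : MemLp g 2 (volume.restrict (Set.Ioc (0:ℝ) 1)) :=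
    (memLp_two_iff_integrable_sq hgm.aestronglyMeasurable).2 hg
  have hgi : Integrable g (volume.restrict (Set.Ioc (0:ℝ) 1)) :=
    memLp_one_iff_integrable.1 (hg2.mono_exponent (by norm_num))
  have hg22 : MemLp (fun y => g y * y) 2 (volume.restrict (Set.Ioc (0:ℝ) 1)) := by
    refine (memLp_two_iff_integrable_sq ?_).2 ?_
    · exact (hgm.mul measurable_id).aestronglyMeasurable
    refine Integrable.mono hg ((hgm.mul measurable_id).pow_const 2).aestronglyMeasurable ?_
    filter_upwards [ae_restrict_mem measurableSet_Ioc] with y hy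
    have hy1 : 0 < y := hy.1
    have hy2 : y ≤ 1 := hy.2
    simp only [Real.norm_eq_abs]
    rw [abs_of_nonneg (sq_nonneg _), abs_of_nonneg (sq_nonneg _)]
    nlinarith [sq_nonneg (g y), mul_le_mul_of_nonneg_left (show y^2 ≤ 1 by nlinarith) (sq_nonneg (g y))]
  have hg2i : Integrable (fun y => g y * y) (volume.restrict (Set.Ioc (0:ℝ) 1)) :=
    memLp_one_iff_integrable.1 (hg22.mono_exponent (by norm_num))
  set A : ℕ → ℝ := fun k => ∫ y in Set.Ioc (0:ℝ) 1, g y * Real.sin (Real.pi*(k+1)*y) with hAdef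
  set B : ℕ → ℝ := fun k => ∫ y in Set.Ioc (0:ℝ) 1, (g y * y) * Real.cos (Real.pi*(k+1)*y) with hBdef
  clear_value A B
  have hA : Summable fun k => A k ^ 2 := by
    simp only [hAdef]
    refine bessel_aux (fun k y => Real.sin (Real.pi*(k+1)*y)) (fun k => by fun_prop)
      (fun k y => hsb _) (fun n m => ?_) g hg2
    rw [← intervalIntegral.integral_of_le zero_le_one]
    exact aux_sinsin n m
  have hB : Summable fun k => B k ^ 2 := by
    simp only [hBdef]
    refine bessel_aux (fun k y => Real.cos (Real.pi*(k+1)*y)) (fun k => by fun_prop)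
      (fun k y => hcb _) (fun n m => ?_) (fun y => g y * y) hg22
    rw [← intervalIntegral.integral_of_le zero_le_one]
    exact aux_coscos n m
  have hBev : ∀ᶠ k in atTop, |B k| ≤ 1/8 := by
    have h0 := hB.tendsto_atTop_zero
    filter_upwards [h0.eventually_lt_const (by norm_num : (0:ℝ) < 1/64)] with k hk
    by_contra hcon
    push_neg at hcon
    nlinarith [sq_abs (B k)]
  set C : ℝ := ∫ y in Set.Ioc (0:ℝ) 1, |g y| with hCdef
  clear_value C
  have hC0 : 0 ≤ C := hCdef ▸ integral_nonneg fun y => abs_nonneg _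
  have hmulint : ∀ w : ℝ → ℝ, Continuous w → (∀ x, |w x| ≤ 1) →
      Integrable (fun y => g y * w y) (volume.restrict (Set.Ioc (0:ℝ) 1)) := by
    intro w hw hbw
    have := hgi.bdd_mul hw.aestronglyMeasurable (c := 1) (Eventually.of_forall fun x => by simpa [Real.norm_eq_abs] using hbw x)
    simpa [mul_comm] using this
  have hmulint2 : ∀ w : ℝ → ℝ, Continuous w → (∀ x, |w x| ≤ 1) →
      Integrable (fun y => (g y * y) * w y) (volume.restrict (Set.Ioc (0:ℝ) 1)) := by
    intro w hw hbw
    have := hg2i.bdd_mul hw.aestronglyMeasurable (c := 1) (Eventually.of_forall fun x => by simpa [Real.norm_eq_abs] using hbw x)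
    simpa [mul_comm] using this
  have key : ∀ k : ℕ, |μ k| ≤ 1 → |Real.sin (μ k)| ≤ |A k| + |μ k| * |B k| + C * μ k ^ 2 := by
    intro k hk1
    have hI := heq k
    rw [intervalIntegral.integral_of_le zero_le_one] at hI
    set a : ℝ := Real.pi * (k+1) with ha
    set m : ℝ := μ k with hm
    clear_value a m
    have hls : |Real.sin (a + m)| = |Real.sin m| := by
      rw [show a + m = m + ((k+1 : ℕ) : ℝ) * Real.pi by rw [ha]; push_cast; ring,
        Real.sin_add_nat_mul_pi]
      rw [abs_mul, abs_pow, abs_neg, abs_one, one_pow, one_mul]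
    have hdec : ∀ y : ℝ, g y * Real.sin ((a+m)*y)
        = g y * Real.sin (a*y) + m * ((g y * y) * Real.cos (a*y))
          + g y * (Real.sin (a*y) * (Real.cos (m*y) - 1) + Real.cos (a*y) * (Real.sin (m*y) - m*y)) := by
      intro y
      rw [add_mul, Real.sin_add]
      ring
    set E : ℝ → ℝ := fun y => g y * (Real.sin (a*y) * (Real.cos (m*y) - 1)
      + Real.cos (a*y) * (Real.sin (m*y) - m*y)) with hE
    clear_value E
    have hint1 : Integrable (fun y => g y * Real.sin (a*y)) (volume.restrict (Set.Ioc (0:ℝ) 1)) :=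
      hmulint _ (by fun_prop) (fun x => hsb _)
    have hint2 : Integrable (fun y => (g y * y) * Real.cos (a*y)) (volume.restrict (Set.Ioc (0:ℝ) 1)) :=
      hmulint2 _ (by fun_prop) (fun x => hcb _)
    have hintL : Integrable (fun y => g y * Real.sin ((a+m)*y)) (volume.restrict (Set.Ioc (0:ℝ) 1)) :=
      hmulint _ (by fun_prop) (fun x => hsb _)
    have hintE : Integrable E (volume.restrict (Set.Ioc (0:ℝ) 1)) := by
      have hEeq : E = fun y => g y * Real.sin ((a+m)*y) - g y * Real.sin (a*y)
          - m * ((g y * y) * Real.cos (a*y)) := by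
        funext y
        simp only [hE]
        linarith [hdec y]
      rw [hEeq]
      exact (hintL.sub hint1).sub (hint2.const_mul m)
    have hsplit : (∫ y in Set.Ioc (0:ℝ) 1, g y * Real.sin ((a+m)*y))
        = A k + m * B k + ∫ y in Set.Ioc (0:ℝ) 1, E y := by
      have hfe : (fun y => g y * Real.sin ((a+m)*y))
          = fun y => (g y * Real.sin (a*y) + m * ((g y * y) * Real.cos (a*y))) + E y := by
        funext y
        simp only [hE]
        linarith [hdec y]
      have hint2' : Integrable (fun y => m * ((g y * y) * Real.cos (a*y)))
          (volume.restrict (Set.Ioc (0:ℝ) 1)) := hint2.const_mul m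
      have hint12 : Integrable (fun y => g y * Real.sin (a*y) + m * ((g y * y) * Real.cos (a*y)))
          (volume.restrict (Set.Ioc (0:ℝ) 1)) := hint1.add hint2'
      have hAk : A k = ∫ y in Set.Ioc (0:ℝ) 1, g y * Real.sin (a*y) := by
        simp only [hAdef]; rw [ha]
      have hBk : B k = ∫ y in Set.Ioc (0:ℝ) 1, (g y * y) * Real.cos (a*y) := by
        simp only [hBdef]; rw [ha]
      rw [hfe, integral_add hint12 hintE, integral_add hint1 hint2', MeasureTheory.integral_const_mul,
        hAk, hBk]
    have hEbound : |∫ y in Set.Ioc (0:ℝ) 1, E y| ≤ C * m ^ 2 := by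
      have step1 : |∫ y in Set.Ioc (0:ℝ) 1, E y| ≤ ∫ y in Set.Ioc (0:ℝ) 1, |E y| := by
        simpa [Real.norm_eq_abs] using norm_integral_le_integral_norm (μ := volume.restrict (Set.Ioc (0:ℝ) 1)) E
      have step2 : (∫ y in Set.Ioc (0:ℝ) 1, |E y|) ≤ ∫ y in Set.Ioc (0:ℝ) 1, |g y| * m ^ 2 := by
        refine integral_mono_ae hintE.abs (hgi.abs.mul_const _) ?_
        filter_upwards [ae_restrict_mem measurableSet_Ioc] with y hy
        have hy1 : 0 < y := hy.1
        have hy2 : y ≤ 1 := hy.2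
        have hmy : |m * y| ≤ 1 := by
          rw [abs_mul, abs_of_nonneg hy1.le]
          nlinarith [abs_nonneg m]
        have hc := aux_cos_approx (m*y)
        have hs := aux_sin_approx hmy
        have hmy2 : (m*y)^2 ≤ m^2 := by nlinarith [sq_nonneg m, show y^2 ≤ 1 by nlinarith]
        have hmy3 : |m*y|^3 ≤ m^2 := by
          have h1 : |m*y|^3 ≤ |m*y|^2 := by
            simpa using pow_le_pow_of_le_one (abs_nonneg _) hmy (by norm_num : 2 ≤ 3)
          calc |m*y|^3 ≤ |m*y|^2 := h1
            _ = (m*y)^2 := sq_abs _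
            _ ≤ m^2 := hmy2
        have hEy : |E y| ≤ |g y| * m ^ 2 := by
          simp only [hE]
          rw [abs_mul]
          have hinner : |Real.sin (a*y) * (Real.cos (m*y) - 1)
              + Real.cos (a*y) * (Real.sin (m*y) - m*y)| ≤ m ^ 2 := by
            calc |Real.sin (a*y) * (Real.cos (m*y) - 1) + Real.cos (a*y) * (Real.sin (m*y) - m*y)|
                ≤ |Real.sin (a*y) * (Real.cos (m*y) - 1)| + |Real.cos (a*y) * (Real.sin (m*y) - m*y)| :=
                  abs_add_le _ _
              _ = |Real.sin (a*y)| * |Real.cos (m*y) - 1| + |Real.cos (a*y)| * |Real.sin (m*y) - m*y| := by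
                  rw [abs_mul, abs_mul]
              _ ≤ 1 * ((m*y)^2/2) + 1 * (|m*y|^3/4) := by
                  have t1 := mul_le_mul (hsb (a*y)) hc (abs_nonneg _) zero_le_one
                  have t2 := mul_le_mul (hcb (a*y)) hs (abs_nonneg _) zero_le_one
                  linarith
              _ ≤ m^2 := by nlinarith
          exact mul_le_mul_of_nonneg_left hinner (abs_nonneg _)
        exact hEy
      have step3 : (∫ y in Set.Ioc (0:ℝ) 1, |g y| * m ^ 2) = C * m ^ 2 := by
        rw [MeasureTheory.integral_mul_const, hCdef]
      linarith
    calc |Real.sin m| = |Real.sin (a + m)| := hls.symm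
      _ = |∫ y in Set.Ioc (0:ℝ) 1, g y * Real.sin ((a+m)*y)| := by rw [hI, abs_neg]
      _ = |A k + m * B k + ∫ y in Set.Ioc (0:ℝ) 1, E y| := by rw [hsplit]
      _ ≤ |A k| + |m * B k| + |∫ y in Set.Ioc (0:ℝ) 1, E y| := abs_add_three _ _ _
      _ ≤ |A k| + |m| * |B k| + C * m ^ 2 := by
          rw [abs_mul]
          linarith [hEbound]
  have hμev : ∀ᶠ k in atTop, |μ k| ≤ min 1 (1/(8*(C+1))) := by
    have hpos : 0 < min 1 (1/(8*(C+1))) := lt_min one_pos (by positivity)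
    filter_upwards [hμ0.eventually (Metric.closedBall_mem_nhds 0 hpos)] with k hk
    simpa [Real.norm_eq_abs] using Metric.mem_closedBall.1 hk
  obtain ⟨N, hN⟩ := eventually_atTop.1 (hμev.and hBev)
  have hfin : ∀ k, N ≤ k → μ k ^ 2 ≤ 16 * A k ^ 2 := by
    intro k hk
    obtain ⟨hk1, hk2⟩ := hN k hk
    have hm1 : |μ k| ≤ 1 := hk1.trans (min_le_left _ _)
    have hm2 : |μ k| ≤ 1/(8*(C+1)) := hk1.trans (min_le_right _ _)
    have h1 := key k hm1
    have h2 := aux_half_sin hm1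
    have h8 : (0:ℝ) < 8*(C+1) := by positivity
    have hm2' : |μ k| * (8*(C+1)) ≤ 1 := by
      rw [← le_div_iff₀ h8]
      exact hm2
    have h3 : C * μ k ^ 2 ≤ |μ k|/8 := by
      have h9 : 8 * C * |μ k| ≤ 1 := by nlinarith [abs_nonneg (μ k)]
      nlinarith [mul_le_mul_of_nonneg_right h9 (abs_nonneg (μ k)), sq_abs (μ k)]
    have h4 : |μ k| * |B k| ≤ |μ k| * (1/8) := mul_le_mul_of_nonneg_left hk2 (abs_nonneg _)
    have h5 : |μ k| ≤ 4 * |A k| := by linarith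
    have h6 : |μ k| * |μ k| ≤ (4 * |A k|) * (4 * |A k|) :=
      mul_le_mul h5 h5 (abs_nonneg _) (by positivity)
    have e1 : |μ k| * |μ k| = μ k ^ 2 := by rw [abs_mul_abs_self]; ring
    have e2 : (4 * |A k|) * (4 * |A k|) = 16 * A k ^ 2 := by
      have h7 := abs_mul_abs_self (A k)
      nlinarith [h7]
    linarith
  rw [← summable_nat_add_iff N]
  refine Summable.of_nonneg_of_le (fun n => sq_nonneg _) (fun n => hfin (n+N) (Nat.le_add_left N n)) ?_
  exact ((summable_nat_add_iff N).2 hA).mul_left 16
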